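/- arXiv:2403.15835 — 2 statements merged into one kernel-verified Lean document; each statement's English description precedes it below -/
import Mathlib

section
/- Let D ≥ 1 and let p ∈ ℝ^D be a probability vector (all entries nonnegative and summing to 1). Then the variance σ(p) = (1/D) Σ_{k=1}^D (p_k − 1/D)² equals (D−1)/D² if and only if p is a one-hot vector, i.e., p = e_k for some k ∈ {1,…,D}. -/
/-- The variance of a probability vector equals (D-1)/D² iff it is one-hot. -/
theorem variance_eq_iff_onehot (D : ℕ) (hD : 1 ≤ D) (p : Fin D → ℝ)
    (hnn : ∀ k, 0 ≤ p k) (hsum : ∑ k, p k = 1) :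
    (1 / (D : ℝ)) * ∑ k, (p k - 1 / (D : ℝ)) ^ 2 = ((D : ℝ) - 1) / (D : ℝ) ^ 2 ↔
      ∃ k, ∀ j, p j = if j = k then 1 else 0 := by
  have hDpos : (0:ℝ) < D := by exact_mod_cast hD
  have hD0 : (D:ℝ) ≠ 0 := ne_of_gt hDpos
  have hexp : ∑ k, (p k - 1 / (D:ℝ)) ^ 2 = (∑ k, p k ^ 2) - 1 / D := by
    have h1 : ∀ k : Fin D, (p k - 1/(D:ℝ))^2 = p k ^ 2 - (2/D) * p k + 1/D^2 := by
      intro k; field_simp; ring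
    rw [Finset.sum_congr rfl (fun k _ => h1 k), Finset.sum_add_distrib,
      Finset.sum_sub_distrib, ← Finset.mul_sum, hsum, Finset.sum_const,
      Finset.card_univ, Fintype.card_fin, nsmul_eq_mul]
    field_simp; ring
  have key : ((1 / (D:ℝ)) * ∑ k, (p k - 1 / (D:ℝ)) ^ 2 = ((D:ℝ) - 1) / (D:ℝ)^2) ↔
      (∑ k, p k ^ 2 = 1) := by
    rw [hexp]
    constructor
    · intro h
      field_simp at h
      nlinarith [pow_pos hDpos 3, sq_nonneg ((D:ℝ))]
    · intro h
      rw [h, eq_div_iff (by positivity : ((D:ℝ)^2) ≠ 0)]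
      field_simp
  rw [key]
  constructor
  · intro h
    have hle : ∀ k, p k ≤ 1 := by
      intro k
      calc p k ≤ ∑ j, p j := Finset.single_le_sum (fun j _ => hnn j) (Finset.mem_univ k)
        _ = 1 := hsum
    have hzero : ∑ k, (p k - p k ^ 2) = 0 := by
      rw [Finset.sum_sub_distrib, hsum, h]; ring
    have heach : ∀ k ∈ Finset.univ, p k - p k ^ 2 = 0 :=
      (Finset.sum_eq_zero_iff_of_nonneg (fun k _ => by nlinarith [hnn k, hle k])).mp hzero
    have h01 : ∀ k : Fin D, p k = 0 ∨ p k = 1 := by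
      intro k
      have h2 := heach k (Finset.mem_univ k)
      have h3 : p k * (1 - p k) = 0 := by nlinarith
      rcases mul_eq_zero.mp h3 with h' | h'
      · exact Or.inl h'
      · exact Or.inr (by linarith)
    have hexists : ∃ k, p k = 1 := by
      by_contra hc
      push_neg at hc
      have hall : ∀ k, p k = 0 := fun k => (h01 k).resolve_right (hc k)
      have : (0:ℝ) = 1 := by
        rw [← hsum, Finset.sum_eq_zero (fun k _ => hall k)]
      norm_num at this
    obtain ⟨k, hk⟩ := hexists
    refine ⟨k, fun j => ?_⟩
    by_cases hj : j = k
    · simp [hj, hk]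
    · simp only [hj, if_false]
      have hrest : ∑ i ∈ Finset.univ.erase k, p i = 0 := by
        have h4 := Finset.add_sum_erase Finset.univ p (Finset.mem_univ k)
        rw [hsum, hk] at h4
        linarith
      exact (Finset.sum_eq_zero_iff_of_nonneg (fun i _ => hnn i)).mp hrest j
        (Finset.mem_erase.mpr ⟨hj, Finset.mem_univ j⟩)
  · rintro ⟨k, hk⟩
    have h5 : ∀ j : Fin D, p j ^ 2 = if j = k then 1 else 0 := by
      intro j; rw [hk j]; split <;> norm_num
    rw [Finset.sum_congr rfl (fun j _ => h5 j)]
    simp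
end

section
/- Let D ≥ 1 and let p ∈ ℝ^D be a probability vector (all entries nonnegative and summing to 1). If the variance σ(p) = (1/D) Σ_{k=1}^D (p_k − 1/D)² equals (D−1)/D², then there exists k ∈ {1,…,D} such that p = e_k. -/
/-- If a probability vector has variance (D-1)/D², then it is one-hot. -/
theorem onehot_of_variance_eq (D : ℕ) (hD : 1 ≤ D) (p : Fin D → ℝ)
    (hnn : ∀ k, 0 ≤ p k) (hsum : ∑ k, p k = 1)
    (hvar : (1 / (D : ℝ)) * ∑ k, (p k - 1 / (D : ℝ)) ^ 2 = ((D : ℝ) - 1) / (D : ℝ) ^ 2) :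
    ∃ k, ∀ j, p j = if j = k then 1 else 0 := by
  have hD0 : (0 : ℝ) < (D : ℝ) := by exact_mod_cast hD
  have hDne : (D : ℝ) ≠ 0 := ne_of_gt hD0
  have hcard : (Finset.univ : Finset (Fin D)).card = D := by simp
  have hexp : ∑ k, (p k - 1 / (D : ℝ)) ^ 2
      = (∑ k, (p k) ^ 2) - 1 / (D : ℝ) := by
    have : ∀ k : Fin D, (p k - 1 / (D : ℝ)) ^ 2
        = (p k) ^ 2 - (2 / (D : ℝ)) * p k + 1 / (D : ℝ) ^ 2 := by
      intro k; ring
    rw [Finset.sum_congr rfl (fun k _ => this k)]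
    rw [Finset.sum_add_distrib, Finset.sum_sub_distrib, ← Finset.mul_sum, hsum,
      Finset.sum_const, hcard, nsmul_eq_mul]
    field_simp
    ring
  have hS : ∑ k, (p k) ^ 2 = 1 := by
    rw [hexp] at hvar
    field_simp at hvar
    have h4 : (∑ k, (p k) ^ 2) * (D : ℝ) ^ 3 = 1 * (D : ℝ) ^ 3 := by
      linear_combination (D : ℝ) ^ 2 * hvar
    exact mul_right_cancel₀ (pow_ne_zero 3 hDne) h4
  have hle1 : ∀ k, p k ≤ 1 := by
    intro k
    calc p k ≤ ∑ j, p j := Finset.single_le_sum (fun j _ => hnn j) (Finset.mem_univ k)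
    _ = 1 := hsum
  have hzero : ∑ k, (p k - (p k) ^ 2) = 0 := by
    rw [Finset.sum_sub_distrib, hsum, hS]; ring
  have h01 : ∀ k : Fin D, p k = 0 ∨ p k = 1 := by
    intro k
    have hnn' : ∀ j ∈ Finset.univ, 0 ≤ p j - (p j) ^ 2 := by
      intro j _
      nlinarith [hnn j, hle1 j]
    have := (Finset.sum_eq_zero_iff_of_nonneg hnn').mp hzero k (Finset.mem_univ k)
    have h : p k * (1 - p k) = 0 := by nlinarith [this]
    rcases mul_eq_zero.mp h with h | h
    · exact Or.inl h
    · right; linarith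
  have hex : ∃ k, p k = 1 := by
    by_contra h
    push_neg at h
    have : ∀ k, p k = 0 := fun k => (h01 k).resolve_right (h k)
    rw [Finset.sum_congr rfl (fun k _ => this k)] at hsum
    simp at hsum
  obtain ⟨k, hk⟩ := hex
  refine ⟨k, fun j => ?_⟩
  by_cases hj : j = k
  · simp [hj, hk]
  · simp only [hj, if_false]
    have hrest : ∑ i ∈ Finset.univ.erase k, p i = 0 := by
      have := Finset.add_sum_erase Finset.univ p (Finset.mem_univ k)
      rw [hsum] at this
      linarith [this, hk]
    exact (Finset.sum_eq_zero_iff_of_nonneg (fun i _ => hnn i)).mp hrest j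
      (Finset.mem_erase.mpr ⟨hj, Finset.mem_univ j⟩)
end
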